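/- Let (X,ψ) be a weighted space and let f: X → ℝ be a function such that the restriction f|_{K_R} is continuous on K_R for every R > 0 and lim_{R→∞} sup_{x ∈ X \ K_R} |f(x)|/ψ(x) = 0. Then f ∈ 𝓑_ψ(X). In particular, every continuous f: X → ℝ satisfying lim_{R→∞} sup_{x ∈ X \ K_R} |f(x)|/ψ(x) = 0 belongs to 𝓑_ψ(X). -/

import Mathlib

open Filter Topology

/-- Approximate extension: a function continuous on a compact subset of a completely regular
Hausdorff space can be uniformly approximated on that set by globally continuous functions. -/
lemma exists_continuous_near_on_compact
    {X : Type*} [TopologicalSpace X] [T2Space X] [CompletelyRegularSpace X]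
    {K : Set X} (hK : IsCompact K) {f : X → ℝ} (hf : ContinuousOn f K)
    {δ : ℝ} (hδ : 0 < δ) :
    ∃ G : X → ℝ, Continuous G ∧ ∀ x ∈ K, |f x - G x| ≤ δ := by
  haveI : CompactSpace ↥K := isCompact_iff_compactSpace.mp hK
  set ι : C(↥K, X) := ⟨Subtype.val, continuous_subtype_val⟩ with hι
  set A : Subalgebra ℝ C(↥K, ℝ) := (ContinuousMap.compRightAlgHom ℝ ℝ ι).range with hA
  have sep : A.SeparatesPoints := by
    intro x y hxy
    have hvne : (x : X) ≠ (y : X) := fun h => hxy (Subtype.ext h)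
    obtain ⟨h, hc, hx0, hy1⟩ :=
      CompletelyRegularSpace.completely_regular (x : X) {(y : X)} isClosed_singleton
        (by simpa using hvne)
    refine ⟨(fun z : ↥K => ((h (z : X) : ℝ))), ⟨ContinuousMap.compRightAlgHom ℝ ℝ ι
      ⟨fun z => ((h z : ℝ)), continuous_subtype_val.comp hc⟩, ⟨⟨fun z => ((h z : ℝ)),
        continuous_subtype_val.comp hc⟩, rfl⟩, rfl⟩, ?_⟩
    have h1 : h (y : X) = 1 := hy1 rfl
    simp [hx0, h1]
  have cf : Continuous (K.restrict f) := hf.restrict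
  obtain ⟨g, hg⟩ := ContinuousMap.exists_mem_subalgebra_near_continuous_of_separatesPoints
    A sep (K.restrict f) cf δ hδ
  obtain ⟨G, hG⟩ := g.2
  refine ⟨G, G.continuous, fun x hx => ?_⟩
  have := hg ⟨x, hx⟩
  rw [← hG] at this
  have h' : |G x - f x| < δ := by
    have h2 : |G (ι ⟨x, hx⟩) - K.restrict f ⟨x, hx⟩| < δ := by simpa [Real.norm_eq_abs] using this
    exact h2
  rw [abs_sub_comm] at h'
  exact h'.le

/-- `f` belongs to `𝓑_ψ(X)`, the closure of the bounded continuous functions `C⁰_b(X)`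
with respect to the weighted norm `‖f‖_{𝓑_ψ} = sup_x |f x| / ψ x`. -/
def MemBpsi {X : Type*} [TopologicalSpace X] (ψ : X → ℝ) (f : X → ℝ) : Prop :=
  ∀ ε > (0 : ℝ), ∃ g : X → ℝ, Continuous g ∧ (∃ C : ℝ, ∀ x, |g x| ≤ C) ∧
    ∀ x, |f x - g x| ≤ ε * ψ x

/-- **(Lemma 2.5 (2)).** Let `(X, ψ)` be a weighted space.  If `f : X → ℝ` is continuous
on every compact sublevel set `K_R = {x | ψ x ≤ R}` (for `R > 0`) and
`lim_{R → ∞} sup_{x ∉ K_R} |f x|/ψ x = 0`, then `f ∈ 𝓑_ψ(X)`.  In particular,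
`f ∈ 𝓑_ψ(X)` for every continuous `f : X → ℝ` satisfying this decay condition. -/
theorem memBpsi_of_continuousOn_of_decay
    {X : Type*} [TopologicalSpace X] [T2Space X] [CompletelyRegularSpace X]
    (ψ : X → ℝ) (hψpos : ∀ x, 0 < ψ x)
    (hψadm : ∀ R > 0, IsCompact {x : X | ψ x ≤ R}) :
    (∀ f : X → ℝ,
      (∀ R > 0, ContinuousOn f {x : X | ψ x ≤ R}) →
      (∀ ε > (0 : ℝ), ∃ R > (0 : ℝ), ∀ x, R < ψ x → |f x| ≤ ε * ψ x) →
      MemBpsi ψ f) ∧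
    (∀ f : X → ℝ, Continuous f →
      (∀ ε > (0 : ℝ), ∃ R > (0 : ℝ), ∀ x, R < ψ x → |f x| ≤ ε * ψ x) →
      MemBpsi ψ f) := by
  -- a global positive lower bound for ψ
  have hc : ∃ c > (0 : ℝ), ∀ x, c ≤ ψ x := by
    by_contra hcon
    push_neg at hcon
    have hne : ∀ n : ℕ, ({x : X | ψ x ≤ 1 / (n + 1)} : Set X).Nonempty := by
      intro n
      obtain ⟨x, hx⟩ := hcon (1 / (n + 1)) (by positivity)
      exact ⟨x, hx.le⟩
    have hcompact : ∀ n : ℕ, IsCompact {x : X | ψ x ≤ 1 / (n + 1)} :=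
      fun n => hψadm _ (by positivity)
    have hdir : Directed (· ⊇ ·) (fun n : ℕ => {x : X | ψ x ≤ 1 / (n + 1)}) := by
      intro m n
      refine ⟨max m n, fun x hx => ?_, fun x hx => ?_⟩
      · simp only [Set.mem_setOf_eq] at hx ⊢
        have hmn : ((m : ℝ)) ≤ ((max m n : ℕ) : ℝ) := by exact_mod_cast Nat.le_max_left m n
        exact le_trans hx (one_div_le_one_div_of_le (by positivity) (by linarith))
      · simp only [Set.mem_setOf_eq] at hx ⊢
        have hmn : ((n : ℝ)) ≤ ((max m n : ℕ) : ℝ) := by exact_mod_cast Nat.le_max_right m n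
        exact le_trans hx (one_div_le_one_div_of_le (by positivity) (by linarith))
    obtain ⟨x, hx⟩ := IsCompact.nonempty_iInter_of_directed_nonempty_isCompact_isClosed
      _ hdir hne hcompact (fun n => (hcompact n).isClosed)
    have : ∀ n : ℕ, ψ x ≤ 1 / (n + 1) := by
      intro n; exact Set.mem_iInter.mp hx n
    have hlim : Tendsto (fun n : ℕ => 1 / ((n : ℝ) + 1)) atTop (nhds 0) :=
      tendsto_one_div_add_atTop_nhds_zero_nat
    have : ψ x ≤ 0 := le_of_tendsto_of_tendsto tendsto_const_nhds hlim
      (Filter.Eventually.of_forall this)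
    exact absurd (hψpos x) (not_lt.mpr this)
  obtain ⟨c, hc0, hcle⟩ := hc
  have main : ∀ f : X → ℝ,
      (∀ R > 0, ContinuousOn f {x : X | ψ x ≤ R}) →
      (∀ ε > (0 : ℝ), ∃ R > (0 : ℝ), ∀ x, R < ψ x → |f x| ≤ ε * ψ x) →
      MemBpsi ψ f := by
    intro f hcont hdecay ε hε
    have hε2 : 0 < ε / 2 := by positivity
    obtain ⟨R, hR0, hRdecay⟩ := hdecay (ε / 2) hε2
    -- bound of f on K_R
    obtain ⟨M, hM⟩ := (hψadm R hR0).exists_bound_of_continuousOn (hcont R hR0)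
    have hM0 : 0 ≤ max M 0 := le_max_right _ _
    set R' : ℝ := max R (2 * max M 0 / ε) with hR'
    have hRR' : R ≤ R' := le_max_left _ _
    have hR'0 : 0 < R' := lt_of_lt_of_le hR0 hRR'
    set L : ℝ := ε / 2 * R' with hL
    have hL0 : 0 ≤ L := by positivity
    -- on K_{R'}, |f| ≤ L
    have hfL : ∀ x, ψ x ≤ R' → |f x| ≤ L := by
      intro x hx
      by_cases hxR : ψ x ≤ R
      · have h1 : |f x| ≤ M := by simpa [Real.norm_eq_abs] using hM x hxR
        have h2 : M ≤ max M 0 := le_max_left _ _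
        have h3 : max M 0 ≤ L := by
          rw [hL]
          have : 2 * max M 0 / ε ≤ R' := le_max_right _ _
          calc max M 0 = ε / 2 * (2 * max M 0 / ε) := by field_simp
            _ ≤ ε / 2 * R' := by gcongr
        linarith
      · push_neg at hxR
        have := hRdecay x hxR
        calc |f x| ≤ ε / 2 * ψ x := this
          _ ≤ ε / 2 * R' := by gcongr
    -- approximate extension of f from K_{R'}
    obtain ⟨G, hGc, hGnear⟩ := exists_continuous_near_on_compact (hψadm R' hR'0)
      (hcont R' hR'0) (show (0:ℝ) < ε / 2 * c by positivity)
    -- clamp G to [-L, L]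
    have lip : ∀ a b : ℝ, |max (-L) (min L a) - max (-L) (min L b)| ≤ |a - b| := by
      intro a b
      calc |max (-L) (min L a) - max (-L) (min L b)|
          ≤ max |(-L) - (-L)| |min L a - min L b| := abs_max_sub_max_le_max _ _ _ _
        _ ≤ |min L a - min L b| := by simp
        _ ≤ max |L - L| |a - b| := abs_min_sub_min_le_max _ _ _ _
        _ ≤ |a - b| := by simp
    refine ⟨fun x => max (-L) (min L (G x)),
      continuous_const.max (continuous_const.min hGc), ⟨L, fun x => ?_⟩, fun x => ?_⟩
    · show |max (-L) (min L (G x))| ≤ L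
      rw [abs_le]
      exact ⟨le_max_left _ _, max_le (by linarith) (min_le_left _ _)⟩
    · show |f x - max (-L) (min L (G x))| ≤ ε * ψ x
      have hψx := hψpos x
      by_cases hx : ψ x ≤ R'
      · -- clamping is 1-Lipschitz and f is already in [-L, L]
        have hfx : |f x| ≤ L := hfL x hx
        have hfix : f x = max (-L) (min L (f x)) := by
          rw [abs_le] at hfx
          rw [min_eq_right hfx.2, max_eq_right hfx.1]
        have lip2 := lip (G x) (f x)
        rw [← hfix] at lip2
        have hnear := hGnear x hx
        have h1 : |f x - max (-L) (min L (G x))| ≤ ε / 2 * c := by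
          rw [abs_sub_comm] at hnear ⊢
          exact lip2.trans hnear
        calc |f x - max (-L) (min L (G x))| ≤ ε / 2 * c := h1
          _ ≤ ε / 2 * ψ x := by gcongr; exact hcle x
          _ ≤ ε * ψ x := by nlinarith
      · push_neg at hx
        have hfx : |f x| ≤ ε / 2 * ψ x := hRdecay x (lt_of_le_of_lt hRR' hx)
        have hgx : |max (-L) (min L (G x))| ≤ L := by
          rw [abs_le]
          exact ⟨le_max_left _ _, max_le (by linarith) (min_le_left _ _)⟩
        have hLψ : L ≤ ε / 2 * ψ x := by
          rw [hL]; gcongr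
        calc |f x - max (-L) (min L (G x))| ≤ |f x| + |max (-L) (min L (G x))| :=
              abs_sub _ _
          _ ≤ ε / 2 * ψ x + L := by gcongr
          _ ≤ ε / 2 * ψ x + ε / 2 * ψ x := by linarith
          _ = ε * ψ x := by ring
  exact ⟨main, fun f hf => main f (fun R _ => hf.continuousOn)⟩
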